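/- Let V be an sp_N-module and define J_H(V) = {v ∈ V : (r r̄^T)^2 v = 0 for all r ∈ Z^N}. Then J_H(V) is an sp_N-submodule of V. -/

import Mathlib

open Matrix

attribute [local instance 100] LieRing.ofAssociativeRing

/-- The standard symplectic matrix `J` for `N = 2n`. -/
noncomputable def Jmat (n : ℕ) : Matrix (Fin n ⊕ Fin n) (Fin n ⊕ Fin n) ℂ :=
  Matrix.fromBlocks 0 1 (-1) 0

/-- The symplectic Lie algebra `sp_N = {A : Aᵀ J + J A = 0}` as a Lie subalgebra of matrices. -/
noncomputable def sp (n : ℕ) : LieSubalgebra ℂ (Matrix (Fin n ⊕ Fin n) (Fin n ⊕ Fin n) ℂ) :=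
  skewAdjointMatricesLieSubalgebra (Jmat n)

namespace JHaux

variable {n : ℕ}

lemma vecMulVec_mul' {m : Type*} [Fintype m] (a b : m → ℂ) (M : Matrix m m ℂ) :
    vecMulVec a b * M = vecMulVec a (M.vecMul b) := by
  ext i j
  simp [mul_apply, vecMulVec_apply, vecMul, dotProduct, Finset.mul_sum, mul_assoc]

lemma mul_vecMulVec' {m : Type*} [Fintype m] (a b : m → ℂ) (M : Matrix m m ℂ) :
    M * vecMulVec a b = vecMulVec (M.mulVec a) b := by
  ext i j
  simp [mul_apply, vecMulVec_apply, mulVec, dotProduct, Finset.sum_mul, mul_assoc]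

lemma transpose_vecMulVec' {m : Type*} (a b : m → ℂ) :
    (vecMulVec a b)ᵀ = vecMulVec b a := by
  ext i j; simp [vecMulVec_apply, mul_comm]

lemma Jmat_transpose (n : ℕ) : (Jmat n)ᵀ = -(Jmat n) := by
  unfold Jmat
  ext i j
  rcases i with i | i <;> rcases j with j | j <;>
    simp [fromBlocks, Matrix.one_apply, eq_comm]

lemma Jmat_vecMul (y : Fin n ⊕ Fin n → ℂ) :
    (Jmat n).vecMul y = -((Jmat n).mulVec y) := by
  conv_lhs => rw [← transpose_transpose (Jmat n)]
  rw [vecMul_transpose, Jmat_transpose, neg_mulVec]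

/-- `x x̄ᵀ` -/
noncomputable def xmat (x : Fin n ⊕ Fin n → ℂ) : Matrix (Fin n ⊕ Fin n) (Fin n ⊕ Fin n) ℂ :=
  vecMulVec x ((Jmat n).mulVec x)

/-- `x z̄ᵀ + z x̄ᵀ` -/
noncomputable def bmat (x z : Fin n ⊕ Fin n → ℂ) : Matrix (Fin n ⊕ Fin n) (Fin n ⊕ Fin n) ℂ :=
  vecMulVec x ((Jmat n).mulVec z) + vecMulVec z ((Jmat n).mulVec x)

lemma key1 (a b : Fin n ⊕ Fin n → ℂ) :
    (vecMulVec a ((Jmat n).mulVec b))ᵀ * (Jmat n)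
      = -((Jmat n) * vecMulVec b ((Jmat n).mulVec a)) := by
  rw [transpose_vecMulVec', vecMulVec_mul', mul_vecMulVec', Jmat_vecMul]
  ext i j
  simp only [vecMulVec_apply, Matrix.neg_apply, Pi.neg_apply]
  ring

lemma mem_sp_iff (A : Matrix (Fin n ⊕ Fin n) (Fin n ⊕ Fin n) ℂ) :
    A ∈ sp n ↔ Aᵀ * Jmat n = Jmat n * (-A) := by
  rw [sp, mem_skewAdjointMatricesLieSubalgebra, mem_skewAdjointMatricesSubmodule]
  rfl

lemma xmat_mem (x : Fin n ⊕ Fin n → ℂ) : xmat x ∈ sp n := by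
  rw [mem_sp_iff, mul_neg, xmat, key1]

lemma bmat_mem (x z : Fin n ⊕ Fin n → ℂ) : bmat x z ∈ sp n := by
  rw [mem_sp_iff, mul_neg, bmat, transpose_add, add_mul, key1, key1, mul_add, neg_add]
  abel

lemma sp_skew (Y : ↥(sp n)) :
    (Y : Matrix (Fin n ⊕ Fin n) (Fin n ⊕ Fin n) ℂ)ᵀ * Jmat n = Jmat n * (-(Y : Matrix _ _ ℂ)) :=
  (mem_sp_iff _).mp Y.2

/-- commutator identity: `[xmat r, M] = bmat r (-(M r))` for `M ∈ sp`. -/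
lemma commutator_eq (r : Fin n ⊕ Fin n → ℂ) (Y : ↥(sp n)) :
    xmat r * (Y : Matrix _ _ ℂ) - (Y : Matrix _ _ ℂ) * xmat r
      = bmat r (-((Y : Matrix (Fin n ⊕ Fin n) (Fin n ⊕ Fin n) ℂ).mulVec r)) := by
  set M := (Y : Matrix (Fin n ⊕ Fin n) (Fin n ⊕ Fin n) ℂ)
  have hM : Mᵀ * Jmat n = Jmat n * (-M) := sp_skew Y
  have hvm : M.vecMul ((Jmat n).mulVec r) = (Jmat n).mulVec (-(M.mulVec r)) := by
    conv_lhs => rw [← transpose_transpose M]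
    rw [vecMul_transpose, mulVec_mulVec, hM, ← mulVec_mulVec, neg_mulVec, ← mulVec_neg]
  rw [xmat, bmat, vecMulVec_mul', mul_vecMulVec', hvm]
  ext i j
  simp only [vecMulVec_apply, Matrix.sub_apply, Matrix.add_apply, Pi.neg_apply, mulVec_neg]
  ring

lemma xmat_expand (r s : Fin n ⊕ Fin n → ℂ) (t : ℂ) :
    xmat (r + t • s) = xmat r + t • bmat r s + (t ^ 2) • xmat s := by
  unfold xmat bmat
  ext i j
  simp [vecMulVec_apply, mulVec_add, mulVec_smul, Matrix.add_apply, Matrix.smul_apply,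
    Pi.add_apply, Pi.smul_apply, smul_eq_mul]
  ring

section Module

variable {V : Type*} [AddCommGroup V] [Module ℂ V]

lemma poly_c1 (c₁ c₂ c₃ c₄ : V)
    (h : ∀ t : ℤ, (t : ℂ) • c₁ + ((t : ℂ) ^ 2) • c₂ + ((t : ℂ) ^ 3) • c₃
      + ((t : ℂ) ^ 4) • c₄ = 0) : c₁ = 0 := by
  have e1 := h 1
  have e2 := h (-1)
  have e3 := h 2
  have e4 := h (-2)
  push_cast at e1 e2 e3 e4
  have h12 : (12 : ℂ) • c₁ = 0 := by
    linear_combination (norm := module) (8 : ℂ) • e1 - (8 : ℂ) • e2 - e3 + e4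
  simpa using h12

variable [LieRingModule ↥(sp n) V] [LieModule ℂ ↥(sp n) V]

lemma bracket_expand (X B Z : ↥(sp n)) (t : ℂ) (v : V) :
    ⁅X + t • B + t ^ 2 • Z, ⁅X + t • B + t ^ 2 • Z, v⁆⁆
      = ⁅X, ⁅X, v⁆⁆
        + t • (⁅X, ⁅B, v⁆⁆ + ⁅B, ⁅X, v⁆⁆)
        + (t ^ 2) • (⁅X, ⁅Z, v⁆⁆ + ⁅B, ⁅B, v⁆⁆ + ⁅Z, ⁅X, v⁆⁆)
        + (t ^ 3) • (⁅B, ⁅Z, v⁆⁆ + ⁅Z, ⁅B, v⁆⁆)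
        + (t ^ 4) • ⁅Z, ⁅Z, v⁆⁆ := by
  simp only [add_lie, smul_lie, lie_add, lie_smul, smul_add, smul_smul]
  module

/-- The set `J_H(V)` as a predicate. -/
def inJH (n : ℕ) (V : Type*) [AddCommGroup V] [Module ℂ V]
    [LieRingModule ↥(sp n) V] (v : V) : Prop :=
  ∀ (r : Fin n ⊕ Fin n → ℤ) (X : ↥(sp n)),
    (X : Matrix (Fin n ⊕ Fin n) (Fin n ⊕ Fin n) ℂ)
      = Matrix.vecMulVec (fun i => (r i : ℂ)) ((Jmat n).mulVec fun i => (r i : ℂ)) →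
    ⁅X, ⁅X, v⁆⁆ = 0

noncomputable def xsp (x : Fin n ⊕ Fin n → ℂ) : ↥(sp n) := ⟨xmat x, xmat_mem x⟩

noncomputable def bsp (x z : Fin n ⊕ Fin n → ℂ) : ↥(sp n) := ⟨bmat x z, bmat_mem x z⟩

lemma c1_zero {v : V} (hv : inJH n V v) (r s : Fin n ⊕ Fin n → ℤ) :
    ⁅(xsp fun i => ((r i : ℤ) : ℂ)), ⁅(bsp (fun i => ((r i : ℤ) : ℂ)) fun i => ((s i : ℤ) : ℂ)), v⁆⁆
      + ⁅(bsp (fun i => ((r i : ℤ) : ℂ)) fun i => ((s i : ℤ) : ℂ)),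
          ⁅(xsp fun i => ((r i : ℤ) : ℂ)), v⁆⁆ = 0 := by
  set rC : Fin n ⊕ Fin n → ℂ := fun i => ((r i : ℤ) : ℂ) with hrC
  set sC : Fin n ⊕ Fin n → ℂ := fun i => ((s i : ℤ) : ℂ) with hsC
  set X : ↥(sp n) := xsp rC
  set B : ↥(sp n) := bsp rC sC
  set Z : ↥(sp n) := xsp sC
  have h0 : ⁅X, ⁅X, v⁆⁆ = 0 := hv r X rfl
  apply poly_c1 _ (⁅X, ⁅Z, v⁆⁆ + ⁅B, ⁅B, v⁆⁆ + ⁅Z, ⁅X, v⁆⁆)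
    (⁅B, ⁅Z, v⁆⁆ + ⁅Z, ⁅B, v⁆⁆) (⁅Z, ⁅Z, v⁆⁆)
  intro t
  have hu : (fun i => (((r + t • s) i : ℤ) : ℂ)) = rC + (t : ℂ) • sC := by
    funext i
    simp only [hrC, hsC, Pi.add_apply, Pi.smul_apply, smul_eq_mul]
    push_cast
    ring
  have hA : ((X + (t : ℂ) • B + ((t : ℂ) ^ 2) • Z :
      ↥(sp n)) : Matrix (Fin n ⊕ Fin n) (Fin n ⊕ Fin n) ℂ)
      = Matrix.vecMulVec (fun i => (((r + t • s) i : ℤ) : ℂ))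
          ((Jmat n).mulVec fun i => (((r + t • s) i : ℤ) : ℂ)) := by
    have : (fun i => (((r + t • s) i : ℤ) : ℂ)) = rC + (t : ℂ) • sC := hu
    rw [this]
    show (xmat rC) + (t : ℂ) • (bmat rC sC) + ((t : ℂ) ^ 2) • (xmat sC)
      = vecMulVec (rC + (t : ℂ) • sC) ((Jmat n).mulVec (rC + (t : ℂ) • sC))
    rw [← xmat_expand]
    rfl
  have hz := hv (r + t • s) (X + (t : ℂ) • B + ((t : ℂ) ^ 2) • Z) hA
  rw [bracket_expand, h0, zero_add] at hz
  exact hz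

lemma L_zero {v : V} (hv : inJH n V v) (r : Fin n ⊕ Fin n → ℤ) (z : Fin n ⊕ Fin n → ℂ) :
    ⁅(xsp fun i => ((r i : ℤ) : ℂ)), ⁅(bsp (fun i => ((r i : ℤ) : ℂ)) z), v⁆⁆
      + ⁅(bsp (fun i => ((r i : ℤ) : ℂ)) z), ⁅(xsp fun i => ((r i : ℤ) : ℂ)), v⁆⁆ = 0 := by
  set rC : Fin n ⊕ Fin n → ℂ := fun i => ((r i : ℤ) : ℂ) with hrC
  -- the map z ↦ bsp rC z is linear
  have bsp_add : ∀ z w : Fin n ⊕ Fin n → ℂ, bsp rC (z + w) = bsp rC z + bsp rC w := by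
    intro z w
    apply Subtype.ext
    show bmat rC (z + w) = bmat rC z + bmat rC w
    unfold bmat
    ext i j
    simp [vecMulVec_apply, mulVec_add, Matrix.add_apply, Pi.add_apply]
    ring
  have bsp_smul : ∀ (a : ℂ) (z : Fin n ⊕ Fin n → ℂ), bsp rC (a • z) = a • bsp rC z := by
    intro a z
    apply Subtype.ext
    show bmat rC (a • z) = a • bmat rC z
    unfold bmat
    ext i j
    simp [vecMulVec_apply, mulVec_smul, Matrix.add_apply, Matrix.smul_apply,
      Pi.add_apply, Pi.smul_apply, smul_eq_mul]
    ring
  set X : ↥(sp n) := xsp rC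
  let L : (Fin n ⊕ Fin n → ℂ) →ₗ[ℂ] V :=
    { toFun := fun z => ⁅X, ⁅bsp rC z, v⁆⁆ + ⁅bsp rC z, ⁅X, v⁆⁆
      map_add' := by
        intro z w
        rw [bsp_add]
        simp only [add_lie, lie_add]
        abel
      map_smul' := by
        intro a z
        rw [bsp_smul]
        simp only [smul_lie, lie_smul, smul_add, RingHom.id_apply] }
  have hL : L = 0 := by
    apply (Pi.basisFun ℂ (Fin n ⊕ Fin n)).ext
    intro i
    have hbe : (Pi.basisFun ℂ (Fin n ⊕ Fin n)) i
        = fun j => (((Pi.single i 1 : (Fin n ⊕ Fin n) → ℤ) j : ℤ) : ℂ) := by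
      funext j
      simp [Pi.basisFun_apply, Pi.single_apply]
    rw [hbe]
    exact (c1_zero hv r (Pi.single i 1)).trans rfl
  exact congrFun (congrArg (fun f => f.toFun) hL) z

end Module

end JHaux

open JHaux in
/-- For an `sp_N`-module `V`, the set `J_H(V) = {v : (r r̄^T)² v = 0 for all r ∈ ℤ^N}` is an
`sp_N`-submodule of `V`. -/
theorem JH_is_submodule (n : ℕ) (V : Type*) [AddCommGroup V] [Module ℂ V]
    [LieRingModule ↥(sp n) V] [LieModule ℂ ↥(sp n) V] :
    ∃ W : LieSubmodule ℂ ↥(sp n) V, (W : Set V) =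
      {v : V | ∀ (r : Fin n ⊕ Fin n → ℤ) (X : ↥(sp n)),
        (X : Matrix (Fin n ⊕ Fin n) (Fin n ⊕ Fin n) ℂ)
          = Matrix.vecMulVec (fun i => (r i : ℂ)) ((Jmat n).mulVec fun i => (r i : ℂ)) →
        ⁅X, ⁅X, v⁆⁆ = 0} := by
  refine ⟨{ carrier := {v : V | ∀ (r : Fin n ⊕ Fin n → ℤ) (X : ↥(sp n)), (X : Matrix (Fin n ⊕ Fin n) (Fin n ⊕ Fin n) ℂ) = Matrix.vecMulVec (fun i => (r i : ℂ)) ((Jmat n).mulVec fun i => (r i : ℂ)) → ⁅X, ⁅X, v⁆⁆ = 0}, zero_mem' := ?hz, add_mem' := ?ha, smul_mem' := ?hs, lie_mem := ?hl }, rfl⟩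
  case hz => intro r X hX; simp
  case ha =>
    intro v w hv hw r X hX
    rw [lie_add, lie_add, hv r X hX, hw r X hX, add_zero]
  case hs =>
    intro c v hv r X hX
    rw [lie_smul, lie_smul, hv r X hX, smul_zero]
  case hl =>
    intro Y v hv r X hX
    set rC : Fin n ⊕ Fin n → ℂ := fun i => ((r i : ℤ) : ℂ) with hrC
    have hXeq : X = xsp rC := Subtype.ext hX
    have hv' : inJH n V v := hv
    have h0 : ⁅X, ⁅X, v⁆⁆ = 0 := hv r X hX
    set z : Fin n ⊕ Fin n → ℂ :=
      -((Y : Matrix (Fin n ⊕ Fin n) (Fin n ⊕ Fin n) ℂ).mulVec rC) with hz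
    have hC : ⁅X, Y⁆ = bsp rC z := by
      apply Subtype.ext
      show ⁅(X : Matrix (Fin n ⊕ Fin n) (Fin n ⊕ Fin n) ℂ),
        (Y : Matrix (Fin n ⊕ Fin n) (Fin n ⊕ Fin n) ℂ)⁆ = bmat rC z
      rw [Ring.lie_def, hX]
      exact commutator_eq rC Y
    calc ⁅X, ⁅X, ⁅Y, v⁆⁆⁆
        = ⁅X, ⁅⁅X, Y⁆, v⁆ + ⁅Y, ⁅X, v⁆⁆⁆ := by rw [← leibniz_lie]
      _ = ⁅X, ⁅⁅X, Y⁆, v⁆⁆ + (⁅⁅X, Y⁆, ⁅X, v⁆⁆ + ⁅Y, ⁅X, ⁅X, v⁆⁆⁆) := by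
          rw [lie_add, leibniz_lie X Y ⁅X, v⁆]
      _ = ⁅X, ⁅⁅X, Y⁆, v⁆⁆ + ⁅⁅X, Y⁆, ⁅X, v⁆⁆ := by rw [h0, lie_zero, add_zero]
      _ = 0 := by rw [hC, hXeq]; exact L_zero hv' r z
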